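/- Let g : ℝ² → ℂ be continuous with |g(ξ)| ≤ C (1 + ‖ξ‖²)^{−2} for some C > 0, let b : ℝ → ℂ be continuous and bounded, let w, ξ₀ ∈ ℝ², and let (δ_ħ)_{ħ∈(0,1]} be positive numbers with δ_ħ ħ^{−1/2} → 0 as ħ → 0⁺. Then ħ Σ_{m ∈ ℤ²} b(δ_ħ ⟨m − ξ₀/ħ, w⟩) g(ħ^{1/2}(m − ξ₀/ħ)) → b(0) ∫_{ℝ²} g(ξ) dξ as ħ → 0⁺. -/

import Mathlib

open MeasureTheory Filter Real
open scoped Topology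

noncomputable section

/-- The Euclidean inner product on `ℝ²`. -/
def dot2 (v w : ℝ × ℝ) : ℝ := v.1 * w.1 + v.2 * w.2

/-- The Euclidean norm on `ℝ²`. -/
def nrm2 (v : ℝ × ℝ) : ℝ := Real.sqrt (dot2 v v)

/-- The canonical embedding `ℤ² ↪ ℝ²`. -/
def toR2 (m : ℤ × ℤ) : ℝ × ℝ := ((m.1 : ℝ), (m.2 : ℝ))

/-- Rotation of an integer vector by `+π/2`. -/
def perpZ (v : ℤ × ℤ) : ℤ × ℤ := (-v.2, v.1)

/-- `v` generates a primitive rank-1 sublattice `Λ = ℤ v` of `ℤ²`. -/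
def Primitive (v : ℤ × ℤ) : Prop := Int.gcd v.1 v.2 = 1

/-- `L_Λ = ‖v_Λ‖`. -/
def LL (v : ℤ × ℤ) : ℝ := nrm2 (toR2 v)

/-- `H_Λ(ξ) = ⟨ξ, v_Λ⟩ / L_Λ`, where `v` is the generator `v_Λ` of `Λ`. -/
def HH (v : ℤ × ℤ) (ξ : ℝ × ℝ) : ℝ := dot2 ξ (toR2 v) / LL v

/-- Integral over a fundamental domain of the torus `𝕋² = ℝ²/ℤ²`. -/
def torusInt (f : ℝ × ℝ → ℂ) : ℂ :=
  ∫ x in Set.Icc ((0, 0) : ℝ × ℝ) ((1, 1) : ℝ × ℝ), f x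

/-- `e^{it}`. -/
def expI (t : ℝ) : ℂ := Complex.exp (Complex.I * (t : ℂ))

lemma floor_scaled_iff {s : ℝ} (hs : 0 < s) (c x : ℝ) (k : ℤ) :
    ⌊x / s + c⌋ = k ↔ s * ((k : ℝ) - c) ≤ x ∧ x < s * ((k : ℝ) - c) + s := by
  have hdiv : x / s * s = x := div_mul_cancel₀ x hs.ne'
  rw [Int.floor_eq_iff]
  constructor
  · rintro ⟨h1, h2⟩
    constructor
    · nlinarith [mul_le_mul_of_nonneg_left h1 hs.le]
    · nlinarith [mul_lt_mul_of_pos_left h2 hs]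
  · rintro ⟨h1, h2⟩
    constructor
    · have h : (k : ℝ) - c ≤ x / s := by rw [le_div_iff₀ hs]; nlinarith
      linarith
    · have h : x / s < (k : ℝ) + 1 - c := by rw [div_lt_iff₀ hs]; nlinarith
      push_cast
      linarith

lemma nrm2_sq (v : ℝ × ℝ) : nrm2 v ^ 2 = v.1 ^ 2 + v.2 ^ 2 := by
  have h : 0 ≤ dot2 v v := by unfold dot2; nlinarith [sq_nonneg v.1, sq_nonneg v.2]
  rw [nrm2, Real.sq_sqrt h, dot2]; ring

lemma decay_bound {C : ℝ} (hC : 0 < C) (x p : ℝ × ℝ)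
    (h1 : |x.1 - p.1| ≤ 1) (h2 : |x.2 - p.2| ≤ 1) :
    C / (1 + nrm2 p ^ 2) ^ 2 ≤ 81 * C * ((1 + x.1 ^ 2)⁻¹ * (1 + x.2 ^ 2)⁻¹) := by
  rw [nrm2_sq, abs_le] at *
  have hd1 : (x.1 - p.1) ^ 2 ≤ 1 := by nlinarith [h1.1, h1.2]
  have hd2 : (x.2 - p.2) ^ 2 ≤ 1 := by nlinarith [h2.1, h2.2]
  have e1 : 1 + x.1 ^ 2 ≤ 3 * (1 + p.1 ^ 2) := by nlinarith [sq_nonneg (2 * p.1 - x.1)]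
  have e2 : 1 + x.2 ^ 2 ≤ 3 * (1 + p.2 ^ 2) := by nlinarith [sq_nonneg (2 * p.2 - x.2)]
  have key : (1 + x.1 ^ 2) * (1 + x.2 ^ 2) ≤ 81 * (1 + (p.1 ^ 2 + p.2 ^ 2)) ^ 2 := by
    have h9 : (1 + x.1 ^ 2) * (1 + x.2 ^ 2) ≤ 9 * ((1 + p.1 ^ 2) * (1 + p.2 ^ 2)) := by
      nlinarith [mul_le_mul e1 e2 (by positivity) (by positivity)]
    nlinarith [sq_nonneg (p.1 * p.2), sq_nonneg p.1, sq_nonneg p.2, sq_nonneg (p.1 ^ 2 + p.2 ^ 2)]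
  have hA : (0:ℝ) < (1 + (p.1 ^ 2 + p.2 ^ 2)) ^ 2 := by positivity
  have hB : (0:ℝ) < (1 + x.1 ^ 2) * (1 + x.2 ^ 2) := by positivity
  have hr : 81 * C * ((1 + x.1 ^ 2)⁻¹ * (1 + x.2 ^ 2)⁻¹)
      = 81 * C / ((1 + x.1 ^ 2) * (1 + x.2 ^ 2)) := by
    field_simp
  rw [hr, div_le_div_iff₀ hA hB]
  nlinarith [mul_le_mul_of_nonneg_left key hC.le]

lemma lattice_sum_eq {s : ℝ} (hs : 0 < s) (c : ℝ × ℝ) (G : ℤ × ℤ → ℂ)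
    (hint : Integrable fun x : ℝ × ℝ => G (⌊x.1 / s + c.1⌋, ⌊x.2 / s + c.2⌋)) :
    ((s * s : ℝ) : ℂ) * ∑' m : ℤ × ℤ, G m
      = ∫ x : ℝ × ℝ, G (⌊x.1 / s + c.1⌋, ⌊x.2 / s + c.2⌋) := by
  set n : ℝ × ℝ → ℤ × ℤ := fun x => (⌊x.1 / s + c.1⌋, ⌊x.2 / s + c.2⌋) with hn
  set cell : ℤ × ℤ → Set (ℝ × ℝ) := fun m =>
    Set.Ico (s * ((m.1 : ℝ) - c.1)) (s * ((m.1 : ℝ) - c.1) + s) ×ˢ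
    Set.Ico (s * ((m.2 : ℝ) - c.2)) (s * ((m.2 : ℝ) - c.2) + s) with hcell
  have hmem : ∀ x m, x ∈ cell m ↔ n x = m := by
    intro x m
    rw [hcell, hn]
    simp only [Set.mem_prod, Set.mem_Ico, Prod.ext_iff]
    exact (and_congr (floor_scaled_iff hs c.1 x.1 m.1) (floor_scaled_iff hs c.2 x.2 m.2)).symm
  have hcellpre : cell = fun m => n ⁻¹' {m} := by
    funext m; ext x
    simp only [Set.mem_preimage, Set.mem_singleton_iff]
    exact hmem x m
  have hmeas : ∀ m, MeasurableSet (cell m) := fun m => measurableSet_Ico.prod measurableSet_Ico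
  have hdisj : Pairwise (Function.onFun Disjoint cell) := by
    rw [hcellpre]; exact pairwise_disjoint_fiber n
  have hunion : (⋃ m, cell m) = Set.univ := by
    rw [hcellpre]; ext x
    simp only [Set.mem_iUnion, Set.mem_preimage, Set.mem_singleton_iff, Set.mem_univ, iff_true]
    exact ⟨n x, rfl⟩
  have hsum := hasSum_integral_iUnion (μ := volume) (f := fun x => G (n x)) hmeas hdisj
    (by rw [hunion]; exact hint.integrableOn)
  have hval : ∀ m : ℤ × ℤ, (∫ x in cell m, G (n x)) = ((s * s : ℝ) : ℂ) * G m := by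
    intro m
    rw [setIntegral_congr_fun (hmeas m) (fun x hx => congrArg G ((hmem x m).mp hx)),
      setIntegral_const]
    have hv : volume (cell m) = ENNReal.ofReal s * ENNReal.ofReal s := by
      rw [hcell]
      simp only []
      rw [Measure.volume_eq_prod, Measure.prod_prod, Real.volume_Ico, Real.volume_Ico]
      congr 2 <;> ring
    rw [measureReal_def, hv, ENNReal.toReal_mul, ENNReal.toReal_ofReal hs.le, Complex.real_smul]
  have hsum' : HasSum (fun m : ℤ × ℤ => ((s * s : ℝ) : ℂ) * G m) (∫ x, G (n x)) := by
    have h1 : (∫ x in ⋃ m, cell m, G (n x)) = ∫ x, G (n x) := by rw [hunion, setIntegral_univ]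
    simp only [hval, h1] at hsum
    exact hsum
  rw [← tsum_mul_left]
  exact hsum'.tsum_eq

/-- rescaled Riemann-sum limit at scales `δ_hb ≪ hb^{1/2}`:
`hb Σ_{m ∈ ℤ²} b(δ_hb ⟨m - ξ₀/hb, w⟩) g(hb^{1/2}(m - ξ₀/hb)) → b(0) ∫_{ℝ²} g(ξ) dξ`. -/
theorem stmt15
    (g : ℝ × ℝ → ℂ) (hgc : Continuous g) (C : ℝ) (hC : 0 < C)
    (hg : ∀ ξ : ℝ × ℝ, ‖g ξ‖ ≤ C / (1 + nrm2 ξ ^ 2) ^ 2)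
    (b : ℝ → ℂ) (hbc : Continuous b) (hbb : ∃ M : ℝ, ∀ t : ℝ, ‖b t‖ ≤ M)
    (w ξ₀ : ℝ × ℝ)
    (δ : ℝ → ℝ) (hδpos : ∀ hb ∈ Set.Ioc (0:ℝ) 1, 0 < δ hb)
    (hδ : Tendsto (fun hb => δ hb / Real.sqrt hb) (𝓝[>] (0:ℝ)) (𝓝 0)) :
    Tendsto
      (fun hb : ℝ => (hb : ℂ) * ∑' m : ℤ × ℤ,
        b (δ hb * dot2 (toR2 m - hb⁻¹ • ξ₀) w) *
          g (Real.sqrt hb • (toR2 m - hb⁻¹ • ξ₀)))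
      (𝓝[>] (0:ℝ)) (𝓝 (b 0 * ∫ ξ : ℝ × ℝ, g ξ)) := by
  obtain ⟨M, hM⟩ := hbb
  have hM0 : 0 ≤ M := le_trans (norm_nonneg _) (hM 0)
  set G : ℝ → ℤ × ℤ → ℂ := fun hb m =>
    b (δ hb * dot2 (toR2 m - hb⁻¹ • ξ₀) w) * g (Real.sqrt hb • (toR2 m - hb⁻¹ • ξ₀)) with hG
  set F : ℝ → ℝ × ℝ → ℂ := fun hb x =>
    G hb (⌊x.1 / Real.sqrt hb + (hb⁻¹ • ξ₀).1⌋, ⌊x.2 / Real.sqrt hb + (hb⁻¹ • ξ₀).2⌋) with hF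
  -- measurability
  have hFmeas : ∀ hb : ℝ, Measurable (F hb) := by
    intro hb
    exact (measurable_of_countable (G hb)).comp
      ((Int.measurable_floor.comp ((measurable_fst.div_const _).add_const _)).prodMk
        (Int.measurable_floor.comp ((measurable_snd.div_const _).add_const _)))
  -- pointwise bound
  have hFbound : ∀ hb ∈ Set.Ioc (0:ℝ) 1, ∀ x : ℝ × ℝ,
      ‖F hb x‖ ≤ M * (81 * C * ((1 + x.1 ^ 2)⁻¹ * (1 + x.2 ^ 2)⁻¹)) := by
    rintro hb ⟨hb0, hb1⟩ x
    set s := Real.sqrt hb with hsdef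
    have hs0 : 0 < s := Real.sqrt_pos.mpr hb0
    have hs1 : s ≤ 1 := by
      rw [hsdef, show (1:ℝ) = Real.sqrt 1 by simp]
      exact Real.sqrt_le_sqrt hb1
    set c := hb⁻¹ • ξ₀ with hcdef
    set m : ℤ × ℤ := (⌊x.1 / s + c.1⌋, ⌊x.2 / s + c.2⌋) with hm
    set p : ℝ × ℝ := s • (toR2 m - c) with hp
    have hp1 : p.1 = s * ((m.1 : ℝ) - c.1) := rfl
    have hp2 : p.2 = s * ((m.2 : ℝ) - c.2) := rfl
    have h1 := (floor_scaled_iff hs0 c.1 x.1 m.1).mp rfl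
    have h2 := (floor_scaled_iff hs0 c.2 x.2 m.2).mp rfl
    have hx1 : |x.1 - p.1| ≤ 1 := by rw [abs_le, hp1]; constructor <;> linarith [h1.1, h1.2]
    have hx2 : |x.2 - p.2| ≤ 1 := by rw [abs_le, hp2]; constructor <;> linarith [h2.1, h2.2]
    have : F hb x = b (δ hb * dot2 (toR2 m - c) w) * g p := rfl
    rw [this, norm_mul]
    exact mul_le_mul (hM _) (le_trans (hg p) (decay_bound hC x p hx1 hx2))
      (norm_nonneg _) hM0
  -- integrable bound
  have hboundint : Integrable (fun x : ℝ × ℝ => M * (81 * C * ((1 + x.1 ^ 2)⁻¹ * (1 + x.2 ^ 2)⁻¹))) := by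
    have h := integrable_inv_one_add_sq.mul_prod integrable_inv_one_add_sq
    rw [← Measure.volume_eq_prod] at h
    exact (h.const_mul (81 * C)).const_mul M
  -- integrability of F hb
  have hFint : ∀ hb ∈ Set.Ioc (0:ℝ) 1, Integrable (F hb) := fun hb hhb =>
    hboundint.mono' (hFmeas hb).aestronglyMeasurable (ae_of_all _ (hFbound hb hhb))
  -- identity
  have heq : ∀ᶠ (hb : ℝ) in 𝓝[>] (0:ℝ),
      (hb : ℂ) * (∑' m : ℤ × ℤ, G hb m) = ∫ x : ℝ × ℝ, F hb x := by
    filter_upwards [Ioc_mem_nhdsGT_of_mem (Set.left_mem_Ico.mpr zero_lt_one)] with hb hhb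
    have hs0 : 0 < Real.sqrt hb := Real.sqrt_pos.mpr hhb.1
    have h := lattice_sum_eq hs0 (hb⁻¹ • ξ₀) (G hb) (hFint hb hhb)
    rwa [Real.mul_self_sqrt hhb.1.le] at h
  -- pointwise limit
  have hlim : ∀ x : ℝ × ℝ, Tendsto (fun hb => F hb x) (𝓝[>] (0:ℝ)) (𝓝 (b 0 * g x)) := by
    intro x
    set p1 : ℝ → ℝ := fun hb =>
      Real.sqrt hb * ((⌊x.1 / Real.sqrt hb + (hb⁻¹ • ξ₀).1⌋ : ℝ) - (hb⁻¹ • ξ₀).1) with hp1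
    set p2 : ℝ → ℝ := fun hb =>
      Real.sqrt hb * ((⌊x.2 / Real.sqrt hb + (hb⁻¹ • ξ₀).2⌋ : ℝ) - (hb⁻¹ • ξ₀).2) with hp2
    have hsq : Tendsto (fun hb : ℝ => Real.sqrt hb) (𝓝[>] (0:ℝ)) (𝓝 0) := by
      have h : Tendsto (fun hb : ℝ => Real.sqrt hb) (𝓝[>] (0:ℝ)) (𝓝 (Real.sqrt 0)) :=
        (Real.continuous_sqrt.tendsto 0).mono_left nhdsWithin_le_nhds
      rwa [Real.sqrt_zero] at h
    have hbd1 : ∀ᶠ hb in 𝓝[>] (0:ℝ), x.1 - Real.sqrt hb ≤ p1 hb ∧ p1 hb ≤ x.1 := by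
      filter_upwards [self_mem_nhdsWithin] with hb hhb
      have hs0 : 0 < Real.sqrt hb := Real.sqrt_pos.mpr hhb
      have h := (floor_scaled_iff hs0 (hb⁻¹ • ξ₀).1 x.1 ⌊x.1 / Real.sqrt hb + (hb⁻¹ • ξ₀).1⌋).mp rfl
      simp only [hp1]
      constructor <;> [linarith [h.2]; exact h.1]
    have hbd2 : ∀ᶠ hb in 𝓝[>] (0:ℝ), x.2 - Real.sqrt hb ≤ p2 hb ∧ p2 hb ≤ x.2 := by
      filter_upwards [self_mem_nhdsWithin] with hb hhb
      have hs0 : 0 < Real.sqrt hb := Real.sqrt_pos.mpr hhb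
      have h := (floor_scaled_iff hs0 (hb⁻¹ • ξ₀).2 x.2 ⌊x.2 / Real.sqrt hb + (hb⁻¹ • ξ₀).2⌋).mp rfl
      simp only [hp2]
      constructor <;> [linarith [h.2]; exact h.1]
    have hP1 : Tendsto p1 (𝓝[>] (0:ℝ)) (𝓝 x.1) := by
      refine tendsto_of_tendsto_of_tendsto_of_le_of_le' ?_ tendsto_const_nhds
        (hbd1.mono fun hb h => h.1) (hbd1.mono fun hb h => h.2)
      simpa using tendsto_const_nhds.sub hsq
    have hP2 : Tendsto p2 (𝓝[>] (0:ℝ)) (𝓝 x.2) := by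
      refine tendsto_of_tendsto_of_tendsto_of_le_of_le' ?_ tendsto_const_nhds
        (hbd2.mono fun hb h => h.1) (hbd2.mono fun hb h => h.2)
      simpa using tendsto_const_nhds.sub hsq
    have hgp : Tendsto (fun hb => g (p1 hb, p2 hb)) (𝓝[>] (0:ℝ)) (𝓝 (g x)) := by
      have hPP : Tendsto (fun hb => ((p1 hb, p2 hb) : ℝ × ℝ)) (𝓝[>] (0:ℝ)) (𝓝 x) := by
        rw [← Prod.mk.eta (p := x)]
        exact hP1.prodMk_nhds hP2
      exact (hgc.tendsto x).comp hPP
    have harg : Tendsto (fun hb => δ hb *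
        dot2 (toR2 (⌊x.1 / Real.sqrt hb + (hb⁻¹ • ξ₀).1⌋, ⌊x.2 / Real.sqrt hb + (hb⁻¹ • ξ₀).2⌋)
          - hb⁻¹ • ξ₀) w) (𝓝[>] (0:ℝ)) (𝓝 0) := by
      have h0 : Tendsto (fun hb => (δ hb / Real.sqrt hb) * (p1 hb * w.1 + p2 hb * w.2))
          (𝓝[>] (0:ℝ)) (𝓝 (0 * (x.1 * w.1 + x.2 * w.2))) :=
        hδ.mul ((hP1.mul_const w.1).add (hP2.mul_const w.2))
      rw [zero_mul] at h0
      refine Tendsto.congr' ?_ h0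
      filter_upwards [self_mem_nhdsWithin] with hb hhb
      have hs0 : (0:ℝ) < Real.sqrt hb := Real.sqrt_pos.mpr hhb
      simp only [hp1, hp2, dot2, toR2, Prod.fst_sub, Prod.snd_sub]
      field_simp
    have hbp : Tendsto (fun hb => b (δ hb *
        dot2 (toR2 (⌊x.1 / Real.sqrt hb + (hb⁻¹ • ξ₀).1⌋, ⌊x.2 / Real.sqrt hb + (hb⁻¹ • ξ₀).2⌋)
          - hb⁻¹ • ξ₀) w)) (𝓝[>] (0:ℝ)) (𝓝 (b 0)) := (hbc.tendsto 0).comp harg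
    have : (fun hb => F hb x) = fun hb => (b (δ hb *
        dot2 (toR2 (⌊x.1 / Real.sqrt hb + (hb⁻¹ • ξ₀).1⌋, ⌊x.2 / Real.sqrt hb + (hb⁻¹ • ξ₀).2⌋)
          - hb⁻¹ • ξ₀) w)) * g (p1 hb, p2 hb) := rfl
    rw [this]
    exact hbp.mul hgp
  -- dominated convergence
  have hDCT : Tendsto (fun hb => ∫ x : ℝ × ℝ, F hb x) (𝓝[>] (0:ℝ))
      (𝓝 (∫ x : ℝ × ℝ, b 0 * g x)) := by
    refine tendsto_integral_filter_of_dominated_convergence _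
      (Eventually.of_forall fun hb => (hFmeas hb).aestronglyMeasurable) ?_ hboundint
      (ae_of_all _ hlim)
    filter_upwards [Ioc_mem_nhdsGT_of_mem (Set.left_mem_Ico.mpr zero_lt_one)] with hb hhb
    exact ae_of_all _ (hFbound hb hhb)
  rw [show (∫ x : ℝ × ℝ, b 0 * g x) = b 0 * ∫ ξ : ℝ × ℝ, g ξ from integral_const_mul _ _] at hDCT
  exact Tendsto.congr' (heq.mono fun hb h => h.symm) hDCT
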